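/- arXiv:0903.5295 — 15 statements merged into one kernel-verified Lean document; each statement's English description precedes it below -/
import Mathlib

section
/- A right ideal P ⊊ R is completely prime if and only if every nonzero R-module endomorphism of R/P is injective. -/
/-- A proper right ideal `P ⊊ R` is completely prime iff every nonzero
`R`-module endomorphism of `R/P` is injective. -/
theorem completelyPrime_iff_endomorphisms_injective
    {R : Type*} [Ring R] (P : Submodule Rᵐᵒᵖ R) (hP : P ≠ ⊤) :
    (∀ a b : R, (∀ p ∈ P, a * p ∈ P) → a * b ∈ P → a ∈ P ∨ b ∈ P) ↔
    (∀ f : Module.End Rᵐᵒᵖ (R ⧸ P), f ≠ 0 → Function.Injective f) := by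
  have mk_eq : ∀ x : R, Submodule.Quotient.mk (p := P) x
      = (MulOpposite.op x) • Submodule.Quotient.mk (p := P) 1 := by
    intro x
    rw [← Submodule.Quotient.mk_smul]
    simp [MulOpposite.smul_eq_mul_unop]
  constructor
  · intro hCP f hf
    obtain ⟨a, ha⟩ := Submodule.Quotient.mk_surjective P (f (Submodule.Quotient.mk 1))
    have hfx : ∀ x : R, f (Submodule.Quotient.mk x) = Submodule.Quotient.mk (a * x) := by
      intro x
      rw [mk_eq x, map_smul, ← ha, ← Submodule.Quotient.mk_smul]
      simp [MulOpposite.smul_eq_mul_unop]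
    have haP : ∀ p ∈ P, a * p ∈ P := by
      intro p hp
      have : f (Submodule.Quotient.mk p) = 0 := by
        rw [(Submodule.Quotient.mk_eq_zero P).2 hp, map_zero]
      rw [hfx p] at this
      exact (Submodule.Quotient.mk_eq_zero P).1 this
    have haN : a ∉ P := by
      intro haP'
      apply hf
      apply LinearMap.ext
      intro x
      obtain ⟨y, rfl⟩ := Submodule.Quotient.mk_surjective P x
      rw [hfx y]
      simp only [LinearMap.zero_apply]
      refine (Submodule.Quotient.mk_eq_zero P).2 ?_
      simpa [MulOpposite.smul_eq_mul_unop] using P.smul_mem (MulOpposite.op y) haP'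
    rw [← LinearMap.ker_eq_bot]
    rw [Submodule.eq_bot_iff]
    intro x hx
    obtain ⟨b, rfl⟩ := Submodule.Quotient.mk_surjective P x
    have : a * b ∈ P := by
      have hx' : f (Submodule.Quotient.mk b) = 0 := hx
      rw [hfx b] at hx'
      exact (Submodule.Quotient.mk_eq_zero P).1 hx'
    rcases hCP a b haP this with h | h
    · exact absurd h haN
    · exact (Submodule.Quotient.mk_eq_zero P).2 h
  · intro hinj a b haP hab
    by_cases haN : a ∈ P
    · exact Or.inl haN
    right
    let g : R →ₗ[Rᵐᵒᵖ] R ⧸ P :=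
      { toFun := fun x => Submodule.Quotient.mk (a * x)
        map_add' := by intro x y; simp [mul_add]
        map_smul' := by
          intro c x
          simp only [MulOpposite.smul_eq_mul_unop, RingHom.id_apply]
          rw [← mul_assoc, ← MulOpposite.smul_eq_mul_unop, Submodule.Quotient.mk_smul] }
    have hker : P ≤ LinearMap.ker g := by
      intro p hp
      exact (Submodule.Quotient.mk_eq_zero P).2 (haP p hp)
    let f : Module.End Rᵐᵒᵖ (R ⧸ P) := P.liftQ g hker
    have hf : ∀ x : R, f (Submodule.Quotient.mk x) = Submodule.Quotient.mk (a * x) :=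
      fun x => rfl
    have hfne : f ≠ 0 := by
      intro h
      apply haN
      have := hf 1
      rw [h] at this
      simp only [LinearMap.zero_apply, mul_one] at this
      exact (Submodule.Quotient.mk_eq_zero P).1 this.symm
    have : f (Submodule.Quotient.mk b) = f 0 := by
      rw [map_zero, hf b]
      exact (Submodule.Quotient.mk_eq_zero P).2 hab
    have := hinj f hfne this
    exact (Submodule.Quotient.mk_eq_zero P).1 this
end

section
/- If P is a completely prime right ideal of a ring R, then the right R-module R/P is indecomposable. -/
/-- A right ideal `P ⊊ R` is completely prime if `aP ⊆ P` and `ab ∈ P` imply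
`a ∈ P` or `b ∈ P`. -/
def IsCompletelyPrimeRightIdeal {R : Type*} [Ring R] (P : Submodule Rᵐᵒᵖ R) : Prop :=
  P ≠ ⊤ ∧ ∀ a b : R, (∀ p ∈ P, a * p ∈ P) → a * b ∈ P → a ∈ P ∨ b ∈ P

/-- If `P` is a completely prime right ideal of `R`, then the right `R`-module
`R/P` is indecomposable. -/
theorem quotient_indecomposable_of_completelyPrime
    {R : Type*} [Ring R] (P : Submodule Rᵐᵒᵖ R)
    (hP : IsCompletelyPrimeRightIdeal P) :
    Nontrivial (R ⧸ P) ∧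
      ∀ N N' : Submodule Rᵐᵒᵖ (R ⧸ P), IsCompl N N' → N = ⊥ ∨ N = ⊤ := by
  obtain ⟨hPtop, hprime⟩ := hP
  have hnt : Nontrivial (R ⧸ P) := Submodule.Quotient.nontrivial_iff.2 hPtop
  refine ⟨hnt, fun N N' hc => ?_⟩
  set f : (R ⧸ P) →ₗ[Rᵐᵒᵖ] (R ⧸ P) := N.subtype ∘ₗ N.projectionOnto N' hc with hf
  have hf_mem : ∀ x, f x ∈ N := fun x => (N.projectionOnto N' hc x).2
  have hf_left : ∀ x ∈ N, f x = x := fun x hx => by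
    simp [hf, Submodule.projectionOnto_apply_left hc ⟨x, hx⟩]
  have hf_right : ∀ x ∈ N', f x = 0 := fun x hx => by
    simp [hf, Submodule.projectionOnto_apply_right hc ⟨x, hx⟩]
  obtain ⟨a, ha⟩ := Submodule.Quotient.mk_surjective P (f (Submodule.Quotient.mk 1))
  have key : ∀ r : R, f (Submodule.Quotient.mk r) = Submodule.Quotient.mk (a * r) := by
    intro r
    have : (Submodule.Quotient.mk r : R ⧸ P) =
        (MulOpposite.op r) • (Submodule.Quotient.mk 1 : R ⧸ P) := by
      rw [← Submodule.Quotient.mk_smul]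
      simp [MulOpposite.smul_eq_mul_unop]
    rw [this, map_smul, ← ha, ← Submodule.Quotient.mk_smul]
    simp [MulOpposite.smul_eq_mul_unop]
  have haP : ∀ p ∈ P, a * p ∈ P := by
    intro p hp
    have h0 : (Submodule.Quotient.mk p : R ⧸ P) = 0 := (Submodule.Quotient.mk_eq_zero P).2 hp
    have := key p
    rw [h0, map_zero] at this
    exact (Submodule.Quotient.mk_eq_zero P).1 this.symm
  have haa : a * a - a ∈ P := by
    have h1 : f (Submodule.Quotient.mk a) = Submodule.Quotient.mk (a * a) := key a
    have h2 : f (Submodule.Quotient.mk a) = Submodule.Quotient.mk a := by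
      rw [ha]; exact hf_left _ (hf_mem _)
    have : (Submodule.Quotient.mk (a * a) : R ⧸ P) = Submodule.Quotient.mk a := by
      rw [← h1, h2]
    rwa [Submodule.Quotient.eq] at this
  have hab : a * (a - 1) ∈ P := by
    have : a * (a - 1) = a * a - a := by rw [mul_sub, mul_one]
    rwa [this]
  rcases hprime a (a - 1) haP hab with h | h
  · left
    have hma : (Submodule.Quotient.mk a : R ⧸ P) = 0 := (Submodule.Quotient.mk_eq_zero P).2 h
    have hfz : ∀ r : R, f (Submodule.Quotient.mk r) = 0 := by
      intro r
      have : (Submodule.Quotient.mk (a * r) : R ⧸ P) =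
          (MulOpposite.op r) • (Submodule.Quotient.mk a : R ⧸ P) := by
        rw [← Submodule.Quotient.mk_smul]
        simp [MulOpposite.smul_eq_mul_unop]
      rw [key r, this, hma, smul_zero]
    ext x
    simp only [Submodule.mem_bot]
    constructor
    · intro hx
      obtain ⟨r, rfl⟩ := Submodule.Quotient.mk_surjective P x
      rw [← hf_left _ hx, hfz]
    · rintro rfl; exact N.zero_mem
  · right
    have hma : (Submodule.Quotient.mk a : R ⧸ P) = Submodule.Quotient.mk 1 := by
      rw [Submodule.Quotient.eq]; simpa using h
    have hfid : ∀ x : R ⧸ P, f x = x := by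
      intro x
      obtain ⟨r, rfl⟩ := Submodule.Quotient.mk_surjective P x
      rw [key r, Submodule.Quotient.eq]
      have h1 : a * r - r = (a - 1) * r := by rw [sub_mul, one_mul]
      have h2 : ((a : R) - 1) * r = (MulOpposite.op r) • (a - 1) := by
        simp [MulOpposite.smul_eq_mul_unop]
      rw [h1, h2]
      exact P.smul_mem _ h
    have hN' : N' = ⊥ := by
      ext x
      simp only [Submodule.mem_bot]
      constructor
      · intro hx
        rw [← hfid x, hf_right x hx]
      · rintro rfl; exact N'.zero_mem
    have := hc.sup_eq_top
    rw [hN', sup_bot_eq] at this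
    exact this
end

section
/- If P is a right ideal of a ring R such that End_R(R/P) is a division ring, then P is a completely prime right ideal. -/
/-- If `End_R(R/P)` is a division ring (nontrivial with all nonzero elements
invertible), then `P` is a completely prime right ideal. -/
theorem completelyPrime_of_end_divisionRing
    {R : Type*} [Ring R] (P : Submodule Rᵐᵒᵖ R)
    (hnt : Nontrivial (Module.End Rᵐᵒᵖ (R ⧸ P)))
    (hdiv : ∀ f : Module.End Rᵐᵒᵖ (R ⧸ P), f ≠ 0 → IsUnit f) :
    IsCompletelyPrimeRightIdeal P := by
  constructor
  · intro hP
    have : Subsingleton (R ⧸ P) := by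
      subst hP
      infer_instance
    have : Subsingleton (Module.End Rᵐᵒᵖ (R ⧸ P)) := by
      constructor
      intro f g
      ext
      exact Subsingleton.elim _ _
    exact (not_subsingleton_iff_nontrivial.mpr hnt) this
  · intro a b ha hab
    by_cases haP : a ∈ P
    · exact Or.inl haP
    refine Or.inr ?_
    set g : R →ₗ[Rᵐᵒᵖ] R ⧸ P :=
      { toFun := fun x => Submodule.Quotient.mk (a * x)
        map_add' := fun x y => by simp [mul_add]
        map_smul' := fun r x => by
          show Submodule.Quotient.mk (a * (x * r.unop)) = r • Submodule.Quotient.mk (a * x)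
          rw [← mul_assoc]
          rfl } with hg
    have hker : P ≤ LinearMap.ker g := by
      intro p hp
      simpa [hg, Submodule.Quotient.mk_eq_zero] using ha p hp
    set f : Module.End Rᵐᵒᵖ (R ⧸ P) := P.liftQ g hker with hf
    have hf1 : f (Submodule.Quotient.mk 1) = Submodule.Quotient.mk a := by
      simp [hf, hg]
    have hfne : f ≠ 0 := by
      intro h
      rw [h] at hf1
      have : (Submodule.Quotient.mk a : R ⧸ P) = 0 := hf1.symm
      exact haP ((Submodule.Quotient.mk_eq_zero P).mp this)
    obtain ⟨u, hu⟩ := hdiv f hfne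
    have hinj : Function.Injective f := by
      intro x y hxy
      have := congrArg (fun z => (↑u⁻¹ : Module.End Rᵐᵒᵖ (R ⧸ P)) z) hxy
      simpa [← hu, ← Module.End.mul_apply] using this
    have hfb : f (Submodule.Quotient.mk b) = 0 := by
      show g b = 0
      simpa [hg, Submodule.Quotient.mk_eq_zero] using hab
    have := hinj (by rw [hfb, map_zero] : f (Submodule.Quotient.mk b) = f 0)
    exact (Submodule.Quotient.mk_eq_zero P).mp this
end

section
/- Every maximal right ideal of a ring R is a completely prime right ideal. -/
/-- Every maximal right ideal of a ring is a completely prime right ideal. -/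
theorem maximal_rightIdeal_completelyPrime
    {R : Type*} [Ring R] (P : Submodule Rᵐᵒᵖ R) (hP : IsCoatom P) :
    IsCompletelyPrimeRightIdeal P := by
  refine ⟨hP.1, fun a b hstab hab => ?_⟩
  by_cases hb : b ∈ P
  · exact Or.inr hb
  · left
    have htop : P ⊔ Submodule.span Rᵐᵒᵖ {b} = ⊤ := by
      refine hP.2 _ (lt_of_le_of_ne le_sup_left ?_)
      intro h
      exact hb (h ▸ Submodule.mem_sup_right (Submodule.mem_span_singleton_self b))
    have h1 : (1 : R) ∈ P ⊔ Submodule.span Rᵐᵒᵖ {b} := htop ▸ Submodule.mem_top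
    obtain ⟨p, hp, q, hq, hpq⟩ := Submodule.mem_sup.mp h1
    obtain ⟨c, rfl⟩ := Submodule.mem_span_singleton.mp hq
    have key : a = a * p + c • (a * b) := by
      calc a = a * (p + c • b) := by rw [hpq, mul_one]
        _ = a * p + c • (a * b) := by
            rw [mul_add]; congr 1
            simp [MulOpposite.smul_eq_mul_unop, mul_assoc]
    rw [key]
    exact P.add_mem (hstab p hp) (P.smul_mem c hab)
end

section
/- A nonzero ring R is a division ring if and only if every proper right ideal of R is completely prime. -/
/-- A nonzero ring `R` is a division ring iff every proper right ideal of `R`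
is completely prime. -/
theorem divisionRing_iff_all_proper_rightIdeals_completelyPrime
    {R : Type*} [Ring R] [Nontrivial R] :
    (∀ a : R, a ≠ 0 → IsUnit a) ↔
      ∀ P : Submodule Rᵐᵒᵖ R, P ≠ ⊤ → IsCompletelyPrimeRightIdeal P := by
  constructor
  · intro h P hP
    refine ⟨hP, fun a b _ hab => ?_⟩
    -- every proper right ideal is ⊥
    have hP0 : ∀ p ∈ P, p = 0 := by
      intro p hp
      by_contra hp0
      obtain ⟨u, hu⟩ := h p hp0
      apply hP
      rw [Submodule.eq_top_iff']
      intro x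
      have hmem : (MulOpposite.op ((↑u⁻¹ : R) * x)) • p ∈ P := P.smul_mem _ hp
      have : p * ((↑u⁻¹ : R) * x) = x := by
        rw [← mul_assoc, ← hu, Units.mul_inv, one_mul]
      simpa [MulOpposite.smul_eq_mul_unop, this] using hmem
    have hab0 : a * b = 0 := hP0 _ hab
    by_cases ha : a = 0
    · exact Or.inl (ha ▸ P.zero_mem)
    · refine Or.inr ?_
      obtain ⟨u, hu⟩ := h a ha
      have hb : b = 0 := by
        have := congrArg (fun x => (↑u⁻¹ : R) * x) hab0
        simpa [← mul_assoc, ← hu, Units.inv_mul] using this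
      exact hb ▸ P.zero_mem
  · intro h a ha
    -- R is a domain
    have hd : ∀ x y : R, x * y = 0 → x = 0 ∨ y = 0 := by
      intro x y hxy
      have hb := h ⊥ bot_ne_top
      have := hb.2 x y (by simp +contextual [Submodule.mem_bot])
        (by simp [Submodule.mem_bot, hxy])
      simpa [Submodule.mem_bot] using this
    -- a has a right inverse
    have hri : ∃ r : R, a * r = 1 := by
      set P : Submodule Rᵐᵒᵖ R := Submodule.span Rᵐᵒᵖ {a * a} with hPdef
      by_cases hT : P = ⊤
      · have h1 : (1 : R) ∈ P := hT ▸ Submodule.mem_top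
        rw [hPdef, Submodule.mem_span_singleton] at h1
        obtain ⟨c, hc⟩ := h1
        exact ⟨a * c.unop, by
          rw [← hc, MulOpposite.smul_eq_mul_unop, mul_assoc]⟩
      · have hp := h P hT
        have hmul : ∀ p ∈ P, a * p ∈ P := by
          intro p hp'
          rw [hPdef, Submodule.mem_span_singleton] at hp' ⊢
          obtain ⟨c, hc⟩ := hp'
          refine ⟨MulOpposite.op (a * c.unop), ?_⟩
          rw [MulOpposite.smul_eq_mul_unop] at hc ⊢
          rw [MulOpposite.unop_op, ← hc]
          simp [mul_assoc]
        have haa : a * a ∈ P := Submodule.mem_span_singleton_self _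
        have : a ∈ P := (hp.2 a a hmul haa).elim id id
        rw [hPdef, Submodule.mem_span_singleton] at this
        obtain ⟨c, hc⟩ := this
        rw [MulOpposite.smul_eq_mul_unop] at hc
        refine ⟨c.unop, ?_⟩
        have : a * (a * c.unop - 1) = 0 := by
          rw [mul_sub, mul_one, ← mul_assoc, hc, sub_self]
        rcases hd _ _ this with h0 | h0
        · exact absurd h0 ha
        · exact sub_eq_zero.mp h0
    obtain ⟨r, hr⟩ := hri
    have hla : r * a = 1 := by
      have : a * (r * a - 1) = 0 := by
        rw [mul_sub, mul_one, ← mul_assoc, hr, one_mul, sub_self]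
      rcases hd _ _ this with h0 | h0
      · exact absurd h0 ha
      · exact sub_eq_zero.mp h0
    exact ⟨⟨a, r, hr, hla⟩, rfl⟩
end

section
/- Let f : R → S be a ring homomorphism, Q a completely prime right ideal of S, and P := f⁻¹(Q). If f maps the idealizer of P into the idealizer of Q, then P is a completely prime right ideal of R. -/
/-- If `f : R → S` is a ring homomorphism, `Q` a completely prime right ideal of `S`,
`P = f⁻¹(Q)`, and `f` maps the idealizer of `P` into the idealizer of `Q`, then `P`
is a completely prime right ideal of `R`. -/
theorem completelyPrime_comap
    {R S : Type*} [Ring R] [Ring S] (f : R →+* S)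
    (Q : Submodule Sᵐᵒᵖ S) (hQ : IsCompletelyPrimeRightIdeal Q)
    (P : Submodule Rᵐᵒᵖ R) (hP : ∀ r : R, r ∈ P ↔ f r ∈ Q)
    (hIdealizer : ∀ x : R, (∀ p ∈ P, x * p ∈ P) → ∀ q ∈ Q, f x * q ∈ Q) :
    IsCompletelyPrimeRightIdeal P := by
  obtain ⟨hQtop, hQprime⟩ := hQ
  constructor
  · intro h
    apply hQtop
    have h1 : (1 : R) ∈ P := h ▸ Submodule.mem_top
    have h1Q : (1 : S) ∈ Q := by simpa using (hP 1).mp h1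
    rw [Submodule.eq_top_iff']
    intro s
    have := Q.smul_mem (MulOpposite.op s) h1Q
    simpa using this
  · intro a b ha hab
    have := hQprime (f a) (f b) (hIdealizer a ha) (by rw [← map_mul]; exact (hP _).mp hab)
    rcases this with h | h
    · exact Or.inl ((hP a).mpr h)
    · exact Or.inr ((hP b).mpr h)
end

section
/- Let F be an Oka family of right ideals in a ring R. Then every right ideal that is maximal in the complement of F is a completely prime right ideal. -/
/-- For `a ∈ R` and a right ideal `I`, the right ideal `a⁻¹I = {r : R | a * r ∈ I}`. -/
def rdiv {R : Type*} [Ring R] (a : R) (I : Submodule Rᵐᵒᵖ R) : Submodule Rᵐᵒᵖ R where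
  carrier := {r : R | a * r ∈ I}
  add_mem' hx hy := by simpa [mul_add] using I.add_mem hx hy
  zero_mem' := by simp
  smul_mem' c x hx := by
    simpa [MulOpposite.smul_eq_mul_unop, ← mul_assoc] using I.smul_mem c hx

/-- An Oka family of right ideals: it contains `R`, and whenever `I + aR` and
`a⁻¹I` belong to the family, so does `I`. -/
def IsOkaFamily {R : Type*} [Ring R] (F : Set (Submodule Rᵐᵒᵖ R)) : Prop :=
  ⊤ ∈ F ∧ ∀ (I : Submodule Rᵐᵒᵖ R) (a : R),
    I ⊔ Submodule.span Rᵐᵒᵖ {a} ∈ F → rdiv a I ∈ F → I ∈ F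

/-- Completely Prime Ideal Principle: if `F` is an Oka family of right ideals,
then every right ideal maximal in the complement of `F` is completely prime. -/
theorem completelyPrimeIdealPrinciple
    {R : Type*} [Ring R] (F : Set (Submodule Rᵐᵒᵖ R)) (hF : IsOkaFamily F)
    (P : Submodule Rᵐᵒᵖ R) (hP : P ∉ F) (hmax : ∀ J : Submodule Rᵐᵒᵖ R, P < J → J ∈ F) :
    IsCompletelyPrimeRightIdeal P := by
  constructor
  · rintro rfl; exact hP hF.1
  · intro a b ha hab
    by_contra h
    push_neg at h
    obtain ⟨haP, hbP⟩ := h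
    apply hP
    apply hF.2 P a
    · apply hmax
      refine lt_of_le_of_ne le_sup_left (fun he => haP ?_)
      rw [he]
      exact le_sup_right (α := Submodule Rᵐᵒᵖ R) (Submodule.subset_span rfl)
    · apply hmax
      refine lt_of_le_of_ne (fun p hp => ha p hp) (fun he => hbP ?_)
      rw [he]
      exact hab
end

section
/- Let F be a right Oka family in a ring R such that every nonempty chain of right ideals in the complement F' has an upper bound in F'. If every completely prime right ideal of R belongs to F, then every right ideal of R belongs to F. -/
/-- CPIP Supplement (3): if `F` is a right Oka family such that every nonempty
chain in the complement `F'` has an upper bound in `F'`, and every completely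
prime right ideal belongs to `F`, then every right ideal belongs to `F`. -/
theorem completelyPrimeIdealPrinciple_supplement
    {R : Type*} [Ring R] (F : Set (Submodule Rᵐᵒᵖ R)) (hF : IsOkaFamily F)
    (hchain : ∀ C : Set (Submodule Rᵐᵒᵖ R), C ⊆ Fᶜ → IsChain (· ≤ ·) C →
      C.Nonempty → ∃ B ∉ F, ∀ I ∈ C, I ≤ B)
    (hprime : ∀ P : Submodule Rᵐᵒᵖ R, IsCompletelyPrimeRightIdeal P → P ∈ F) :
    ∀ I : Submodule Rᵐᵒᵖ R, I ∈ F := by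
  intro I
  by_contra hI
  obtain ⟨M, -, hM, hmax⟩ := zorn_le_nonempty₀ Fᶜ
    (fun c hc hchain' x hx => by
      obtain ⟨B, hB, hub⟩ := hchain c hc hchain' ⟨x, hx⟩
      exact ⟨B, hB, hub⟩) I hI
  refine hM (hprime M ⟨fun htop => hM (htop ▸ hF.1), fun a b hstab hab => ?_⟩)
  by_contra hcon
  push_neg at hcon
  obtain ⟨ha, hb⟩ := hcon
  refine hM (hF.2 M a ?_ ?_)
  · by_contra h1
    exact ha ((le_antisymm le_sup_left (hmax h1 le_sup_left)) ▸
      (le_sup_right : _ ≤ M ⊔ Submodule.span Rᵐᵒᵖ {a})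
        (Submodule.mem_span_singleton_self a))
  · by_contra h2
    have hle : M ≤ rdiv a M := fun p hp => hstab p hp
    exact hb ((le_antisymm hle (hmax h2 hle)) ▸ hab)
end

section
/- In any ring R, the family of finitely generated right ideals is a right Oka family; consequently a right ideal maximal with respect to not being finitely generated is completely prime. -/
/-- Left multiplication by `a` as an `Rᵐᵒᵖ`-linear map. -/
def lmul {R : Type*} [Ring R] (a : R) : R →ₗ[Rᵐᵒᵖ] R where
  toFun m := a * m
  map_add' := mul_add a
  map_smul' c m := by
    simp [MulOpposite.smul_eq_mul_unop, mul_assoc]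

lemma mem_rdiv {R : Type*} [Ring R] {a r : R} {I : Submodule Rᵐᵒᵖ R} :
    r ∈ rdiv a I ↔ a * r ∈ I := Iff.rfl

lemma top_fg {R : Type*} [Ring R] : (⊤ : Submodule Rᵐᵒᵖ R).FG := by
  refine ⟨{1}, eq_top_iff.2 fun x _ => ?_⟩
  simp only [Finset.coe_singleton]
  exact Submodule.mem_span_singleton.2 ⟨MulOpposite.op x, by simp [MulOpposite.smul_eq_mul_unop]⟩

/-- The family of finitely generated right ideals is a right Oka family;
consequently a right ideal maximal with respect to not being finitely
generated is completely prime. -/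
theorem fg_isOkaFamily_and_max_not_fg_completelyPrime {R : Type*} [Ring R] :
    IsOkaFamily {I : Submodule Rᵐᵒᵖ R | I.FG} ∧
    ∀ P : Submodule Rᵐᵒᵖ R, ¬ P.FG → (∀ J : Submodule Rᵐᵒᵖ R, P < J → J.FG) →
      IsCompletelyPrimeRightIdeal P := by
  have oka : IsOkaFamily {I : Submodule Rᵐᵒᵖ R | I.FG} := by
    refine ⟨top_fg, ?_⟩
    intro I a hJ hK
    obtain ⟨T, hT⟩ := hJ
    have hdec : ∀ t ∈ T, ∃ x r : R, x ∈ I ∧ t = x + a * r := by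
      intro t ht
      have htm : (t : R) ∈ I ⊔ Submodule.span Rᵐᵒᵖ {a} := by
        rw [← hT]; exact Submodule.subset_span ht
      obtain ⟨x, hx, y, hy, hxy⟩ := Submodule.mem_sup.1 htm
      obtain ⟨c, hc⟩ := Submodule.mem_span_singleton.1 hy
      refine ⟨x, c.unop, hx, ?_⟩
      rw [← hxy, ← hc, MulOpposite.smul_eq_mul_unop]
    choose! x r hx heq using hdec
    have key : I = Submodule.span Rᵐᵒᵖ (x '' ↑T) ⊔ (rdiv a I).map (lmul a) := by
      apply le_antisymm
      · intro y hy
        have hyJ : y ∈ Submodule.span Rᵐᵒᵖ (↑T : Set R) := by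
          rw [hT]; exact Submodule.mem_sup_left hy
        obtain ⟨c, -, hc⟩ := Submodule.mem_span_finset.1 hyJ
        set w : R := ∑ t ∈ T, c t • r t with hw
        have hs : y = (∑ t ∈ T, c t • x t) + a * w := by
          rw [← hc, hw, Finset.mul_sum, ← Finset.sum_add_distrib]
          refine Finset.sum_congr rfl fun t ht => ?_
          have h2 : c t • t = c t • (x t + a * r t) := by rw [← heq t ht]
          rw [h2, smul_add]
          congr 1
          simp [MulOpposite.smul_eq_mul_unop, mul_assoc]
        have h1 : (∑ t ∈ T, c t • x t) ∈ I :=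
          Submodule.sum_mem _ fun t ht => Submodule.smul_mem _ _ (hx t ht)
        have haw : a * w ∈ I := by
          have h3 : a * w = y - ∑ t ∈ T, c t • x t := by rw [hs]; abel
          rw [h3]; exact I.sub_mem hy h1
        have hmem : a * w ∈ (rdiv a I).map (lmul a) := ⟨w, haw, rfl⟩
        rw [hs]
        refine Submodule.add_mem _ (Submodule.mem_sup_left ?_) (Submodule.mem_sup_right hmem)
        exact Submodule.sum_mem _ fun t ht =>
          Submodule.smul_mem _ _ (Submodule.subset_span ⟨t, ht, rfl⟩)
      · refine sup_le ?_ ?_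
        · rw [Submodule.span_le]
          rintro _ ⟨t, ht, rfl⟩
          exact hx t ht
        · rintro _ ⟨k, hk, rfl⟩
          exact hk
    rw [key]
    exact Submodule.FG.sup (Submodule.fg_span (T.finite_toSet.image x)) (hK.map _)
  refine ⟨oka, ?_⟩
  intro P hP hmax
  refine ⟨fun h => hP (h ▸ top_fg), ?_⟩
  intro a b haP hab
  by_contra h
  push_neg at h
  obtain ⟨ha, hb⟩ := h
  apply hP
  apply oka.2 P a
  · exact hmax _ (lt_of_le_of_ne le_sup_left fun he =>
      ha (he ▸ Submodule.mem_sup_right (Submodule.subset_span rfl)))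
  · refine hmax _ (lt_of_le_of_ne (fun p hp => haP p hp) fun he => hb ?_)
    exact he ▸ (mem_rdiv.2 hab)
end

section
/- A ring R is right noetherian if and only if every completely prime right ideal of R is finitely generated. -/
open Submodule

/-- Left multiplication by `a` as an `Rᵐᵒᵖ`-linear map on `R`. -/
private def lmulLeft {R : Type*} [Ring R] (a : R) : R →ₗ[Rᵐᵒᵖ] R where
  toFun x := a * x
  map_add' x y := mul_add a x y
  map_smul' c x := by
    simp only [MulOpposite.smul_eq_mul_unop, RingHom.id_apply, mul_assoc]

/-- A noncommutative Cohen's theorem: a ring is right noetherian (every right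
ideal is finitely generated) iff all of its completely prime right ideals are
finitely generated. -/
theorem rightNoetherian_iff_completelyPrimes_fg {R : Type*} [Ring R] :
    (∀ I : Submodule Rᵐᵒᵖ R, I.FG) ↔
      (∀ P : Submodule Rᵐᵒᵖ R, IsCompletelyPrimeRightIdeal P → P.FG) := by
  constructor
  · intro h P _; exact h P
  intro h
  by_contra hI
  push_neg at hI
  obtain ⟨I₀, hI₀⟩ := hI
  -- Zorn: get a maximal non-f.g. right ideal
  obtain ⟨P, -, hPmax⟩ := zorn_le_nonempty₀ {I : Submodule Rᵐᵒᵖ R | ¬ I.FG}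
    (fun c hcs hchain y hy => by
      refine ⟨sSup c, ?_, fun z hz => le_sSup hz⟩
      intro hfg
      rw [Submodule.fg_iff_compact] at hfg
      obtain ⟨J, hJc, hle⟩ := (CompleteLattice.isCompactElement_iff_le_of_directed_sSup_le _
        (sSup c)).mp hfg c ⟨y, hy⟩ hchain.directedOn le_rfl
      exact hcs hJc ((Submodule.fg_iff_compact J).mpr
        (le_antisymm (le_sSup hJc) hle ▸ hfg) )) I₀ hI₀
  have hP : ¬ P.FG := hPmax.prop
  have hfg_gt : ∀ J : Submodule Rᵐᵒᵖ R, P ≤ J → J ≠ P → J.FG := by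
    intro J hle hne
    by_contra hJ
    exact hne (le_antisymm (hPmax.le_of_ge hJ hle) hle)
  apply hP
  apply h
  constructor
  · rintro rfl
    exact hP ⟨{1}, by simp [Submodule.span_singleton_eq_top_iff]⟩
  intro a b haP hab
  classical
  by_contra hcon
  push_neg at hcon
  obtain ⟨ha, hb⟩ := hcon
  apply hP
  -- J = {x | a * x ∈ P}
  set f : R →ₗ[Rᵐᵒᵖ] R := lmulLeft a with hf
  set J : Submodule Rᵐᵒᵖ R := Submodule.comap f P with hJdef
  have hPJ : P ≤ J := fun p hp => haP p hp
  have hbJ : b ∈ J := hab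
  have hJfg : J.FG := hfg_gt J hPJ (fun hEq => hb (hEq ▸ hbJ))
  -- K = P ⊔ aR
  set K : Submodule Rᵐᵒᵖ R := P ⊔ Submodule.span Rᵐᵒᵖ {a} with hKdef
  have hKfg : K.FG := hfg_gt K le_sup_left
    (fun hEq => ha (hEq ▸ (le_sup_right : _ ≤ K) (Submodule.mem_span_singleton_self a)))
  obtain ⟨T, hT⟩ := hKfg
  -- decompose each generator of K
  have hdec : ∀ t : R, ∃ p r : R, p ∈ P ∧ (t ∈ T → t = p + a * r) := by
    intro t
    by_cases ht : t ∈ T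
    · have : t ∈ K := hT ▸ Submodule.subset_span ht
      rw [hKdef, Submodule.mem_sup] at this
      obtain ⟨y, hy, z, hz, hyz⟩ := this
      rw [Submodule.mem_span_singleton] at hz
      obtain ⟨c, rfl⟩ := hz
      exact ⟨y, c.unop, hy, fun _ => by
        rw [← hyz, MulOpposite.smul_eq_mul_unop]⟩
    · exact ⟨0, 0, P.zero_mem, fun h => absurd h ht⟩
  choose p r hpP hpr using hdec
  -- claim: P = span (p '' T) ⊔ f '' J
  have key : P = Submodule.span Rᵐᵒᵖ ↑(T.image p) ⊔ Submodule.map f J := by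
    apply le_antisymm
    · intro x hx
      have hxK : x ∈ Submodule.span Rᵐᵒᵖ (↑T : Set R) := by
        rw [hT]; exact Submodule.mem_sup_left hx
      replace hxK : ∃ c : R → Rᵐᵒᵖ, ∑ i ∈ T, c i • i = x := (Submodule.mem_span_finset.mp hxK).imp fun _ h => h.2
      obtain ⟨c, hc⟩ := hxK
      have hx2 : x = (∑ t ∈ T, c t • p t) + f (∑ t ∈ T, c t • r t) := by
        rw [map_sum, ← Finset.sum_add_distrib, ← hc]
        refine Finset.sum_congr rfl fun t ht => ?_
        rw [map_smul, ← smul_add]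
        congr 1
        have := hpr t ht
        simp only [hf, lmulLeft, LinearMap.coe_mk, AddHom.coe_mk]
        exact this
      have hq : (∑ t ∈ T, c t • p t) ∈ P := Submodule.sum_mem _ fun t ht =>
        Submodule.smul_mem _ _ (hpP t)
      have hw : (∑ t ∈ T, c t • r t) ∈ J := by
        show f _ ∈ P
        have : f (∑ t ∈ T, c t • r t) = x - (∑ t ∈ T, c t • p t) := by
          rw [hx2]; abel
        rw [this]
        exact P.sub_mem hx hq
      have hq' : (∑ t ∈ T, c t • p t) ∈ Submodule.span Rᵐᵒᵖ ↑(T.image p) :=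
        Submodule.sum_mem _ fun t ht => Submodule.smul_mem _ _
          (Submodule.subset_span (by simp; exact ⟨t, ht, rfl⟩))
      rw [hx2]
      exact Submodule.add_mem_sup hq' ⟨_, hw, rfl⟩
    · apply sup_le
      · rw [Submodule.span_le]
        intro x hx
        rw [Finset.coe_image] at hx
        obtain ⟨t, -, rfl⟩ := hx
        exact hpP t
      · rintro x ⟨w, hw, rfl⟩
        exact hw
  rw [key]
  exact Submodule.FG.sup (Submodule.fg_span (Finset.finite_toSet _)) (Submodule.FG.map f hJfg)
end

section
/- Let R be a ring and M a nonzero right R-module. The family of right ideals of R that are not of the form ann(m) for some nonzero m ∈ M is a right Oka family; consequently, a right ideal maximal among point annihilators of M is completely prime. -/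
/-- The point annihilator `ann(m) = {r : R | m·r = 0}` of an element `m` of a
right `R`-module `M`, as a right ideal of `R`. -/
def pointAnn {R : Type*} [Ring R] {M : Type*} [AddCommGroup M] [Module Rᵐᵒᵖ M]
    (m : M) : Submodule Rᵐᵒᵖ R where
  carrier := {r : R | MulOpposite.op r • m = 0}
  add_mem' {x y} hx hy := by
    simp only [Set.mem_setOf_eq] at *
    rw [MulOpposite.op_add, add_smul, hx, hy, add_zero]
  zero_mem' := by simp
  smul_mem' c x hx := by
    simp only [Set.mem_setOf_eq] at *
    rw [MulOpposite.smul_eq_mul_unop, MulOpposite.op_mul, MulOpposite.op_unop, mul_smul,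
      hx, smul_zero]

/-- For a nonzero right module `M`, the family of right ideals that are not
point annihilators of `M` is a right Oka family; consequently a right ideal
maximal among the point annihilators of `M` is completely prime. -/
theorem pointAnn_oka_and_maximal_completelyPrime
    {R : Type*} [Ring R] {M : Type*} [AddCommGroup M] [Module Rᵐᵒᵖ M]
    [Nontrivial M] :
    IsOkaFamily {I : Submodule Rᵐᵒᵖ R | ¬ ∃ m : M, m ≠ 0 ∧ I = pointAnn m} ∧
    ∀ P : Submodule Rᵐᵒᵖ R, (∃ m : M, m ≠ 0 ∧ P = pointAnn m) →
      (∀ J : Submodule Rᵐᵒᵖ R, (∃ m : M, m ≠ 0 ∧ J = pointAnn m) → P ≤ J → P = J) →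
      IsCompletelyPrimeRightIdeal P := by
  constructor
  · constructor
    · rintro ⟨m, hm, h⟩
      apply hm
      have h1 : (1 : R) ∈ pointAnn (M := M) m := by rw [← h]; trivial
      have : MulOpposite.op (1 : R) • m = 0 := h1
      simpa using this
    · rintro I a h1 h2 ⟨m, hm, hI⟩
      by_cases hma : MulOpposite.op a • m = 0
      · apply h1
        refine ⟨m, hm, ?_⟩
        have ha : a ∈ I := by rw [hI]; exact hma
        rw [sup_eq_left.mpr (by rwa [Submodule.span_le, Set.singleton_subset_iff])]
        exact hI
      · apply h2
        refine ⟨MulOpposite.op a • m, hma, ?_⟩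
        ext r
        show a * r ∈ I ↔ _
        rw [hI]
        show MulOpposite.op (a * r) • m = 0 ↔
          MulOpposite.op r • (MulOpposite.op a • m) = 0
        rw [MulOpposite.op_mul, mul_smul]
  · rintro P ⟨m, hm, hP⟩ hmax
    constructor
    · intro h
      apply hm
      have h1 : (1 : R) ∈ P := by rw [h]; trivial
      rw [hP] at h1
      have : MulOpposite.op (1 : R) • m = 0 := h1
      simpa using this
    · intro a b haP hab
      by_cases ha : a ∈ P
      · exact Or.inl ha
      · right
        have hma : MulOpposite.op a • m ≠ 0 := by
          intro h
          exact ha (by rw [hP]; exact h)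
        have hJ : P = pointAnn (MulOpposite.op a • m) := by
          apply hmax _ ⟨_, hma, rfl⟩
          intro p hp
          show MulOpposite.op p • (MulOpposite.op a • m) = 0
          rw [← mul_smul, ← MulOpposite.op_mul]
          have hap := haP p hp
          rw [hP] at hap
          exact hap
        have hb : b ∈ pointAnn (MulOpposite.op a • m) := by
          show MulOpposite.op b • (MulOpposite.op a • m) = 0
          rw [← mul_smul, ← MulOpposite.op_mul]
          rw [hP] at hab
          exact hab
        rw [hJ]
        exact hb
end

section
/- Let M be a module over a ring R such that R satisfies the ascending chain condition on point annihilators of M. Then the set of zero-divisors of M in R is a union of completely prime right ideals. -/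
/-- If `R` satisfies the ascending chain condition on point annihilators of a
module `M`, then the set of zero-divisors of `M` in `R` is a union of
completely prime right ideals. -/
theorem zeroDivisors_union_of_completelyPrimes
    {R : Type*} [Ring R] {M : Type*} [AddCommGroup M] [Module Rᵐᵒᵖ M]
    (hacc : ∀ f : ℕ →o Submodule Rᵐᵒᵖ R,
      (∀ n : ℕ, ∃ m : M, m ≠ 0 ∧ f n = pointAnn m) → ∃ n, ∀ k, n ≤ k → f k = f n) :
    ∃ S : Set (Submodule Rᵐᵒᵖ R), (∀ P ∈ S, IsCompletelyPrimeRightIdeal P) ∧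
      {z : R | ∃ m : M, m ≠ 0 ∧ MulOpposite.op z • m = 0} = ⋃ P ∈ S, (P : Set R) := by

  classical
  have hmax : ∀ m : M, m ≠ 0 → ∃ m₀ : M, m₀ ≠ 0 ∧ pointAnn (R := R) m ≤ pointAnn m₀ ∧
      ∀ m' : M, m' ≠ 0 → pointAnn (R := R) m₀ ≤ pointAnn m' → pointAnn (R := R) m' = pointAnn m₀ := by
    intro m hm
    by_contra h
    push_neg at h
    set T := {p : M // p ≠ 0 ∧ pointAnn (R := R) m ≤ pointAnn p} with hT
    have step : ∀ t : T, ∃ t' : T, pointAnn (R := R) t.1 < pointAnn t'.1 := by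
      rintro ⟨p, hp, hle⟩
      obtain ⟨m', hm', hle', hne⟩ := h p hp hle
      exact ⟨⟨m', hm', hle.trans hle'⟩, lt_of_le_of_ne hle' (Ne.symm hne)⟩
    choose stepf hstep using step
    let seq : ℕ → T := fun n => stepf^[n] ⟨m, hm, le_rfl⟩
    have hmono : StrictMono (fun n => pointAnn (R := R) (seq n).1) := by
      apply strictMono_nat_of_lt_succ
      intro n
      have : seq (n + 1) = stepf (seq n) := Function.iterate_succ_apply' stepf n _
      rw [this]
      exact hstep _
    obtain ⟨n, hn⟩ := hacc ⟨fun n => pointAnn (seq n).1, hmono.monotone⟩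
      (fun n => ⟨(seq n).1, (seq n).2.1, rfl⟩)
    exact absurd (hn (n + 1) (Nat.le_succ n)) (hmono (Nat.lt_succ_self n)).ne'
  refine ⟨{P | ∃ m : M, m ≠ 0 ∧ P = pointAnn m ∧
      ∀ m' : M, m' ≠ 0 → P ≤ pointAnn m' → pointAnn m' = P}, ?_, ?_⟩
  · rintro P ⟨m, hm, rfl, hPmax⟩
    constructor
    · intro htop
      have h1 : (1 : R) ∈ pointAnn m := htop ▸ Submodule.mem_top
      have : MulOpposite.op (1 : R) • m = 0 := h1
      rw [MulOpposite.op_one, one_smul] at this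
      exact hm this
    · intro a b haP hab
      by_cases ha : a ∈ pointAnn m
      · exact Or.inl ha
      · right
        have hma : MulOpposite.op a • m ≠ 0 := ha
        have hle : pointAnn (R := R) m ≤ pointAnn (MulOpposite.op a • m) := by
          intro p hp
          show MulOpposite.op p • (MulOpposite.op a • m) = 0
          rw [← mul_smul, ← MulOpposite.op_mul]
          exact haP p hp
        have heq := hPmax _ hma hle
        have hb : b ∈ pointAnn (MulOpposite.op a • m) := by
          show MulOpposite.op b • (MulOpposite.op a • m) = 0
          rw [← mul_smul, ← MulOpposite.op_mul]
          exact hab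
        rw [heq] at hb
        exact hb
  · ext z
    simp only [Set.mem_setOf_eq, Set.mem_iUnion, SetLike.mem_coe]
    constructor
    · rintro ⟨m, hm, hz⟩
      obtain ⟨m₀, hm₀, hle, hmax'⟩ := hmax m hm
      exact ⟨pointAnn m₀, ⟨m₀, hm₀, rfl, hmax'⟩, hle hz⟩
    · rintro ⟨P, ⟨m, hm, rfl, _⟩, hz⟩
      exact ⟨m, hm, hz⟩
end

section
/- A nonzero ring R is a domain if and only if every nonzero completely prime right ideal of R contains a left regular element. -/
/-- The "germ annihilator" of an ultrafilter of ring elements: all `s` such that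
`m * s = 0` for `V`-most `m`.  It is a right ideal. -/
def germAnn {R : Type*} [Ring R] (V : Ultrafilter R) : Submodule Rᵐᵒᵖ R where
  carrier := {s | ∀ᶠ m in (V : Filter R), m * s = 0}
  zero_mem' := by
    filter_upwards with m using mul_zero m
  add_mem' := by
    intro x y hx hy
    filter_upwards [hx, hy] with m hmx hmy
    rw [mul_add, hmx, hmy, add_zero]
  smul_mem' := by
    intro r x hx
    filter_upwards [hx] with m hmx
    show m * (x * r.unop) = 0
    rw [← mul_assoc, hmx, zero_mul]

theorem mem_germAnn {R : Type*} [Ring R] (V : Ultrafilter R) (s : R) :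
    s ∈ germAnn V ↔ ∀ᶠ m in (V : Filter R), m * s = 0 := Iff.rfl

/-- A nonzero ring `R` is a domain iff every nonzero completely prime right
ideal of `R` contains a left regular element. -/
theorem isDomain_iff_completelyPrimes_contain_leftRegular
    {R : Type*} [Ring R] [Nontrivial R] :
    IsDomain R ↔
      ∀ P : Submodule Rᵐᵒᵖ R, IsCompletelyPrimeRightIdeal P → P ≠ ⊥ →
        ∃ s ∈ P, ∀ r : R, r * s = 0 → r = 0 := by
  constructor
  · intro hdom P _ hPbot
    obtain ⟨s, hsP, hs0⟩ := (Submodule.ne_bot_iff P).mp hPbot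
    exact ⟨s, hsP, fun r hr => by
      rcases mul_eq_zero.mp hr with h | h
      · exact h
      · exact absurd h hs0⟩
  · intro H
    have key : ∀ a b : R, a * b = 0 → a = 0 ∨ b = 0 := by
      intro a b hab
      by_contra hcon
      push_neg at hcon
      obtain ⟨ha, hb⟩ := hcon
      -- the family of "germ-annihilator" right ideals containing `b`
      set Fam : Set (Submodule Rᵐᵒᵖ R) :=
        {P | b ∈ P ∧ ∃ V : Ultrafilter R,
          (∀ᶠ m in (V : Filter R), m ≠ 0) ∧ P = germAnn V} with hFam
      -- the base member: the right annihilator of `a`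
      have hbase : germAnn (pure a : Ultrafilter R) ∈ Fam := by
        refine ⟨?_, ⟨pure a, ?_, rfl⟩⟩
        · show ∀ᶠ m in (pure a : Filter R), m * b = 0
          simpa using hab
        · simpa using ha
      -- Zorn's lemma
      obtain ⟨P, -, hPmem, hPmax⟩ :
          ∃ P, germAnn (pure a : Ultrafilter R) ≤ P ∧ Maximal (· ∈ Fam) P := by
        refine zorn_le_nonempty₀ Fam ?_ _ hbase |>.imp fun P hP => ⟨hP.1, hP.2⟩
        rintro c hcFam hchain y hyc
        -- choose ultrafilters for the members of the chain
        have hsel : ∀ P : c, ∃ V : Ultrafilter R,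
            (∀ᶠ m in (V : Filter R), m ≠ 0) ∧ (P : Submodule Rᵐᵒᵖ R) = germAnn V :=
          fun P => (hcFam P.2).2
        choose V hVne hVeq using hsel
        haveI : Nonempty c := ⟨⟨y, hyc⟩⟩
        -- the filter of "up-sets" of the chain
        have hdir : Directed (· ≥ ·)
            (fun P : c => (Filter.principal {Q : c | (P : Submodule Rᵐᵒᵖ R) ≤ Q})) := by
          intro P Q
          rcases hchain.total P.2 Q.2 with h | h
          · exact ⟨Q, Filter.principal_mono.2 fun Z hZ => le_trans h hZ,
              Filter.principal_mono.2 fun Z hZ => hZ⟩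
          · exact ⟨P, Filter.principal_mono.2 fun Z hZ => hZ,
              Filter.principal_mono.2 fun Z hZ => le_trans h hZ⟩
        have hne : Filter.NeBot (⨅ P : c, Filter.principal {Q : c | (P : Submodule Rᵐᵒᵖ R) ≤ Q}) :=
          Filter.iInf_neBot_of_directed hdir fun P =>
            Filter.principal_neBot_iff.2 ⟨P, le_refl (P : Submodule Rᵐᵒᵖ R)⟩
        let 𝒰 : Ultrafilter c := @Ultrafilter.of _ _ hne
        have h𝒰le : (𝒰 : Filter c) ≤ _ := @Ultrafilter.of_le _ _ hne
        have hup : ∀ P : c, {Q : c | (P : Submodule Rᵐᵒᵖ R) ≤ Q} ∈ 𝒰 := by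
          intro P
          exact h𝒰le (Filter.mem_iInf_of_mem P (Filter.mem_principal_self _))
        -- combined ultrafilter
        let W : Ultrafilter R := 𝒰.bind V
        have hWev : ∀ p : R → Prop,
            ((∀ᶠ m in (W : Filter R), p m) ↔ ∀ᶠ Q in (𝒰 : Filter c), ∀ᶠ m in (V Q : Filter R), p m) :=
          fun p => Filter.eventually_bind
        have hmemW : ∀ s : R, s ∈ germAnn W ↔ ∀ᶠ Q : c in (𝒰 : Filter c), s ∈ (Q : Submodule Rᵐᵒᵖ R) := by
          intro s
          rw [mem_germAnn, hWev]
          constructor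
          · intro h
            filter_upwards [h] with Q hQ
            rw [hVeq Q]; exact hQ
          · intro h
            filter_upwards [h] with Q hQ
            rw [hVeq Q] at hQ; exact hQ
        have hle : ∀ z ∈ c, z ≤ germAnn W := by
          intro z hz s hs
          rw [hmemW]
          filter_upwards [hup ⟨z, hz⟩] with Q hQ using hQ hs
        refine ⟨germAnn W, ⟨?_, ⟨W, ?_, rfl⟩⟩, hle⟩
        · exact hle y hyc ((hcFam hyc).1)
        · rw [hWev]
          filter_upwards with Q using hVne Q
      -- P is completely prime
      obtain ⟨hbP, V, hVne, hVeq⟩ := hPmem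
      have hcp : IsCompletelyPrimeRightIdeal P := by
        constructor
        · intro htop
          have h1 : (1 : R) ∈ P := htop ▸ Submodule.mem_top
          rw [hVeq, mem_germAnn] at h1
          obtain ⟨m, hm0, hm⟩ := (hVne.and h1).exists
          exact hm0 (by simpa using hm)
        · intro x y hxP hxy
          by_cases hx : ∀ᶠ m in (V : Filter R), m * x = 0
          · left
            rw [hVeq, mem_germAnn]; exact hx
          · right
            have hx' : ∀ᶠ m in (V : Filter R), m * x ≠ 0 := Ultrafilter.eventually_not.2 hx
            set W : Ultrafilter R := V.map (fun m => m * x) with hW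
            have hWev : ∀ p : R → Prop,
                ((∀ᶠ n in (W : Filter R), p n) ↔ ∀ᶠ m in (V : Filter R), p (m * x)) :=
              fun p => Filter.eventually_map
            have hPle : P ≤ germAnn W := by
              intro p hp
              rw [mem_germAnn, hWev]
              have : x * p ∈ P := hxP p hp
              rw [hVeq, mem_germAnn] at this
              filter_upwards [this] with m hm
              rw [mul_assoc]; exact hm
            have hWmem : germAnn W ∈ Fam := by
              refine ⟨hPle hbP, ⟨W, ?_, rfl⟩⟩
              rw [hWev]; exact hx'
            have : germAnn W = P := le_antisymm (hPmax hWmem hPle) hPle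
            rw [← this, mem_germAnn, hWev]
            have := hxy
            rw [hVeq, mem_germAnn] at this
            filter_upwards [this] with m hm
            rw [← mul_assoc] at hm; exact hm
      have hPbot : P ≠ ⊥ := by
        intro h
        rw [h, Submodule.mem_bot] at hbP
        exact hb hbP
      obtain ⟨s, hsP, hreg⟩ := H P hcp hPbot
      rw [hVeq, mem_germAnn] at hsP
      obtain ⟨m, hm0, hm⟩ := (hVne.and hsP).exists
      exact hm0 (hreg m hm)
    haveI : NoZeroDivisors R :=
      ⟨fun {x y} h => key x y h⟩
    exact NoZeroDivisors.to_isDomain R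
end

section
/- A nonzero right R-module M is monoform (every nonzero submodule of M is dense in M) if and only if M is uniform and every nonzero homomorphism from any cyclic submodule C of M to M is injective. -/
/-- A submodule `N` of a right `R`-module `M` is dense if for all `x, y ∈ M`
with `x ≠ 0`, `x · (y⁻¹N) ≠ 0`, i.e. there is `r ∈ R` with `y·r ∈ N` and
`x·r ≠ 0`. -/
def IsDenseSubmodule {R : Type*} [Ring R] {M : Type*} [AddCommGroup M]
    [Module Rᵐᵒᵖ M] (N : Submodule Rᵐᵒᵖ M) : Prop :=
  ∀ x y : M, x ≠ 0 → ∃ r : R, MulOpposite.op r • y ∈ N ∧ MulOpposite.op r • x ≠ 0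

/-- From the cyclic-hom injectivity condition: if `ann y ⊆ ann x` and `x ≠ 0`,
then `ann x ⊆ ann y`. -/
lemma ann_antisymm_of_cyclic_homs_injective
    {R : Type*} [Ring R] {M : Type*} [AddCommGroup M] [Module Rᵐᵒᵖ M]
    (hcyc : ∀ (c : M) (f : (Submodule.span Rᵐᵒᵖ {c} : Submodule Rᵐᵒᵖ M) →ₗ[Rᵐᵒᵖ] M),
          f ≠ 0 → Function.Injective f)
    (y x : M) (hx : x ≠ 0)
    (hle : ∀ s : Rᵐᵒᵖ, s • y = 0 → s • x = 0) :
    ∀ s : Rᵐᵒᵖ, s • x = 0 → s • y = 0 := by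
  set h : Rᵐᵒᵖ →ₗ[Rᵐᵒᵖ] M := LinearMap.toSpanSingleton Rᵐᵒᵖ M y
  set g : Rᵐᵒᵖ →ₗ[Rᵐᵒᵖ] M := LinearMap.toSpanSingleton Rᵐᵒᵖ M x
  have hker : LinearMap.ker h ≤ LinearMap.ker g := by
    intro s hs
    simp only [LinearMap.mem_ker, LinearMap.toSpanSingleton_apply, h, g] at *
    exact hle s hs
  have hrange : (Submodule.span Rᵐᵒᵖ ({y} : Set M)) = LinearMap.range h :=
    LinearMap.span_singleton_eq_range Rᵐᵒᵖ M y
  set e : (Submodule.span Rᵐᵒᵖ ({y} : Set M) : Submodule Rᵐᵒᵖ M)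
      ≃ₗ[Rᵐᵒᵖ] (Rᵐᵒᵖ ⧸ LinearMap.ker h) :=
    (LinearEquiv.ofEq _ _ hrange).trans h.quotKerEquivRange.symm
  set f : (Submodule.span Rᵐᵒᵖ ({y} : Set M) : Submodule Rᵐᵒᵖ M) →ₗ[Rᵐᵒᵖ] M :=
    ((LinearMap.ker h).liftQ g hker).comp e.toLinearMap
  have hy : y ∈ Submodule.span Rᵐᵒᵖ ({y} : Set M) := Submodule.mem_span_singleton_self y
  have hfy : f ⟨y, hy⟩ = x := by
    have h1 : h 1 = y := by simp [h]
    have : e ⟨y, hy⟩ = Submodule.Quotient.mk (1 : Rᵐᵒᵖ) := by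
      have := h.quotKerEquivRange_symm_apply_image 1 (LinearMap.mem_range_self h 1)
      simp only [e, LinearEquiv.trans_apply]
      rw [show (LinearEquiv.ofEq _ _ hrange ⟨y, hy⟩ : LinearMap.range h)
            = ⟨h 1, LinearMap.mem_range_self h 1⟩ by
          apply Subtype.ext; simp [h1]]
      simpa using this
    simp only [f, LinearMap.comp_apply, LinearEquiv.coe_toLinearMap, this,
      Submodule.liftQ_apply]
    simp [g]
  have hf0 : f ≠ 0 := by
    intro h0
    apply hx
    rw [← hfy, h0]
    rfl
  have hinj := hcyc y f hf0
  intro s hs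
  have hmem : s • y ∈ Submodule.span Rᵐᵒᵖ ({y} : Set M) :=
    Submodule.smul_mem _ s hy
  have : f ⟨s • y, hmem⟩ = 0 := by
    have : (⟨s • y, hmem⟩ : Submodule.span Rᵐᵒᵖ ({y} : Set M))
        = s • (⟨y, hy⟩ : Submodule.span Rᵐᵒᵖ ({y} : Set M)) := rfl
    rw [this, map_smul, hfy, hs]
  have := hinj (a₁ := ⟨s • y, hmem⟩) (a₂ := 0) (by simpa using this)
  simpa [Subtype.ext_iff] using this

/-- A nonzero module `M` is monoform (every nonzero submodule is dense) iff it
is uniform and every nonzero homomorphism from a cyclic submodule of `M` to `M`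
is injective. -/
theorem monoform_iff_uniform_and_cyclic_homs_injective
    {R : Type*} [Ring R] {M : Type*} [AddCommGroup M] [Module Rᵐᵒᵖ M]
    [Nontrivial M] :
    (∀ N : Submodule Rᵐᵒᵖ M, N ≠ ⊥ → IsDenseSubmodule N) ↔
      ((∀ N N' : Submodule Rᵐᵒᵖ M, N ≠ ⊥ → N' ≠ ⊥ → N ⊓ N' ≠ ⊥) ∧
        ∀ (c : M) (f : (Submodule.span Rᵐᵒᵖ {c} : Submodule Rᵐᵒᵖ M) →ₗ[Rᵐᵒᵖ] M),
          f ≠ 0 → Function.Injective f) := by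
  constructor
  · intro hdense
    constructor
    · intro N N' hN hN'
      obtain ⟨x, hxN', hx⟩ := Submodule.exists_mem_ne_zero_of_ne_bot hN'
      obtain ⟨r, hrN, hrx⟩ := hdense N hN x x hx
      intro hbot
      apply hrx
      have : MulOpposite.op r • x ∈ N ⊓ N' :=
        ⟨hrN, Submodule.smul_mem _ _ hxN'⟩
      rw [hbot] at this
      simpa using this
    · intro c f hf
      have hc : c ∈ Submodule.span Rᵐᵒᵖ ({c} : Set M) := Submodule.mem_span_singleton_self c
      have hfc : f ⟨c, hc⟩ ≠ 0 := by
        intro h0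
        apply hf
        ext z
        obtain ⟨s, hs⟩ := Submodule.mem_span_singleton.mp z.2
        have : z = s • (⟨c, hc⟩ : Submodule.span Rᵐᵒᵖ ({c} : Set M)) :=
          Subtype.ext hs.symm
        rw [this, map_smul, h0, smul_zero]
        rfl
      rw [← LinearMap.ker_eq_bot]
      by_contra hker
      set K : Submodule Rᵐᵒᵖ M :=
        (LinearMap.ker f).map (Submodule.span Rᵐᵒᵖ ({c} : Set M)).subtype
      have hK : K ≠ ⊥ := by
        intro h0
        apply hker
        apply Submodule.map_injective_of_injective
          (Submodule.injective_subtype (Submodule.span Rᵐᵒᵖ ({c} : Set M)))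
        rw [Submodule.map_bot]
        exact h0
      obtain ⟨r, hrK, hrfc⟩ := hdense K hK (f ⟨c, hc⟩) c hfc
      obtain ⟨z, hzker, hzval⟩ := hrK
      apply hrfc
      have hzeq : z = MulOpposite.op r • (⟨c, hc⟩ : Submodule.span Rᵐᵒᵖ ({c} : Set M)) :=
        Subtype.ext hzval
      rw [← map_smul, ← hzeq]
      exact hzker
  · rintro ⟨huni, hcyc⟩ N hN x y hx
    by_cases hy : y = 0
    · exact ⟨1, by simp [hy], by simpa using hx⟩
    by_contra hcon
    push_neg at hcon
    have hle : ∀ s : Rᵐᵒᵖ, s • y = 0 → s • x = 0 := by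
      intro s hs
      have := hcon s.unop (by rw [MulOpposite.op_unop, hs]; exact Submodule.zero_mem N)
      simpa using this
    have hann := ann_antisymm_of_cyclic_homs_injective hcyc y x hx hle
    have hyspan : Submodule.span Rᵐᵒᵖ ({y} : Set M) ≠ ⊥ := by
      simp [Submodule.span_singleton_eq_bot, hy]
    have hint := huni (Submodule.span Rᵐᵒᵖ ({y} : Set M)) N hyspan hN
    obtain ⟨z, hz, hznz⟩ := Submodule.exists_mem_ne_zero_of_ne_bot hint
    obtain ⟨hz1, hz2⟩ := hz
    obtain ⟨s, hs⟩ := Submodule.mem_span_singleton.mp hz1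
    apply hznz
    rw [← hs]
    apply hann
    have := hcon s.unop (by rw [MulOpposite.op_unop, hs]; exact hz2)
    simpa using this
end

section
/- Let F be a divisible right Oka family in a ring R (i.e., a right Oka family such that I ∈ F implies a⁻¹I ∈ F for all a ∈ R). Then every right ideal P maximal in the complement of F is comonoform, meaning R/P is a monoform module (every nonzero submodule of R/P is dense in R/P). -/
/-- If `F` is a divisible right Oka family, then every right ideal `P` maximal
in the complement of `F` is comonoform: `R/P` is nonzero and monoform. -/
theorem divisible_oka_max_comonoform
    {R : Type*} [Ring R] (F : Set (Submodule Rᵐᵒᵖ R)) (hF : IsOkaFamily F)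
    (hdiv : ∀ I ∈ F, ∀ a : R, rdiv a I ∈ F)
    (P : Submodule Rᵐᵒᵖ R) (hP : P ∉ F)
    (hmax : ∀ J : Submodule Rᵐᵒᵖ R, P < J → J ∈ F) :
    Nontrivial (R ⧸ P) ∧
      ∀ N : Submodule Rᵐᵒᵖ (R ⧸ P), N ≠ ⊥ → IsDenseSubmodule N := by
  obtain ⟨htop, hoka⟩ := hF
  have hPtop : P < ⊤ := lt_top_iff_ne_top.mpr (fun h => hP (h ▸ htop))
  refine ⟨(Submodule.Quotient.nontrivial_iff (p := P)).mpr hPtop.ne, ?_⟩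
  intro N hN x y hx
  obtain ⟨a, rfl⟩ := Submodule.Quotient.mk_surjective P x
  obtain ⟨b, rfl⟩ := Submodule.Quotient.mk_surjective P y
  have ha : a ∉ P := fun h => hx ((Submodule.Quotient.mk_eq_zero P).mpr h)
  set J : Submodule Rᵐᵒᵖ R := N.comap P.mkQ with hJ
  have hPJ : P < J := by
    obtain ⟨n, hnN, hn0⟩ := Submodule.exists_mem_ne_zero_of_ne_bot hN
    obtain ⟨c, rfl⟩ := Submodule.Quotient.mk_surjective P n
    refine lt_of_le_of_ne (fun p hp => ?_) (fun h => ?_)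
    · show P.mkQ p ∈ N
      have h0 : P.mkQ p = 0 := by
        simpa [Submodule.mkQ_apply, Submodule.Quotient.mk_eq_zero] using hp
      rw [h0]; exact N.zero_mem
    · have hcJ : c ∈ J := hnN
      rw [← h] at hcJ
      exact hn0 ((Submodule.Quotient.mk_eq_zero P).mpr hcJ)
  by_contra hcon
  push_neg at hcon
  -- hcon : ∀ r, op r • mk b ∈ N → op r • mk a = 0
  have key : ∀ r : R, b * r ∈ J → a * r ∈ P := by
    intro r hbr
    have h1 : MulOpposite.op r • (Submodule.Quotient.mk b : R ⧸ P) ∈ N := by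
      have : MulOpposite.op r • (Submodule.Quotient.mk b : R ⧸ P) =
          Submodule.Quotient.mk (b * r) := by
        rw [← Submodule.Quotient.mk_smul, op_smul_eq_mul]
      rw [this]; exact hbr
    have h2 := hcon r h1
    have : MulOpposite.op r • (Submodule.Quotient.mk a : R ⧸ P) =
        Submodule.Quotient.mk (a * r) := by
      rw [← Submodule.Quotient.mk_smul, op_smul_eq_mul]
    rw [this] at h2
    exact (Submodule.Quotient.mk_eq_zero P).mp h2
  -- Zorn: maximal J' ⊇ J with b⁻¹J' ≤ a⁻¹P
  set S : Set (Submodule Rᵐᵒᵖ R) := {J' | J ≤ J' ∧ ∀ r : R, b * r ∈ J' → a * r ∈ P} with hS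
  obtain ⟨J', hJJ', hJ'max⟩ := zorn_le_nonempty₀ S (fun c hcS hchain y hyc => by
      refine ⟨sSup c, ⟨le_trans (hcS hyc).1 (le_sSup hyc), fun r hr => ?_⟩,
        fun z hz => le_sSup hz⟩
      obtain ⟨p, hpc, hp⟩ := (Submodule.mem_sSup_of_directed ⟨y, hyc⟩
        (hchain.directedOn)).mp hr
      exact (hcS hpc).2 r hp) J ⟨le_rfl, key⟩
  obtain ⟨⟨hJleJ', hJ'div⟩, hJ'm⟩ := hJ'max
  -- a⁻¹P = b⁻¹J'
  have heq : rdiv a P = rdiv b J' := by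
    apply le_antisymm
    · intro t hat
      -- show b * t ∈ J' using maximality against J' ⊔ span {b*t}
      have hmem : J' ⊔ Submodule.span Rᵐᵒᵖ {b * t} ∈ S := by
        refine ⟨le_trans hJleJ' le_sup_left, fun r hr => ?_⟩
        obtain ⟨u, hu, v, hv, huv⟩ := Submodule.mem_sup.mp hr
        obtain ⟨s, rfl⟩ := Submodule.mem_span_singleton.mp hv
        have hbts : s • (b * t) = b * (t * s.unop) := by
          simp [MulOpposite.smul_eq_mul_unop, mul_assoc]
        have h3 : b * (r - t * s.unop) ∈ J' := by
          have : b * (r - t * s.unop) = u := by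
            rw [mul_sub, ← hbts, ← huv, add_sub_cancel_right]
          rw [this]; exact hu
        have h4 := hJ'div _ h3
        have h5 : a * (t * s.unop) ∈ P := by
          have := P.smul_mem s hat
          simpa [MulOpposite.smul_eq_mul_unop, mul_assoc] using this
        have : a * r = a * (r - t * s.unop) + a * (t * s.unop) := by
          rw [mul_sub, sub_add_cancel]
        rw [this]; exact P.add_mem h4 h5
      have hle : J' ≤ J' ⊔ Submodule.span Rᵐᵒᵖ {b * t} := le_sup_left
      have := hJ'm hmem hle
      show b * t ∈ J'
      exact this (Submodule.mem_sup_right (Submodule.mem_span_singleton_self (b * t)))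
    · intro t hbt
      exact hJ'div t hbt
  have hJ'F : J' ∈ F := hmax J' (lt_of_lt_of_le hPJ hJleJ')
  have haPF : rdiv a P ∈ F := heq ▸ hdiv J' hJ'F b
  have hsup : P ⊔ Submodule.span Rᵐᵒᵖ {a} ∈ F := by
    apply hmax
    refine lt_of_le_of_ne le_sup_left (fun h => ha ?_)
    have : a ∈ P ⊔ Submodule.span Rᵐᵒᵖ {a} :=
      Submodule.mem_sup_right (Submodule.mem_span_singleton_self a)
    rwa [← h] at this
  exact hP (hoka P a hsup haPF)
end
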